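/- Suppose every coupling J_B (B ∈ 𝔅) is independently Gaussian with mean J_{0,B} ∈ ℝ and variance Λ_B² > 0. Fix A ∈ 𝔅. Then the quenched average of the square of the correlation function has the finite lower bound E[ tanh²(β J) ]_{{0, Λ_A²}} ≤ E[ ⟨σ_A⟩_J² ]_{{J_{0,B}, Λ_B²}}, where the left-hand side is the expectation of tanh²(β x) under a centered Gaussian with variance Λ_A² and is independent of all means J_{0,B} and of all other interactions. -/

import Mathlib

open MeasureTheory Real Finset ProbabilityTheory

open scoped NNReal ENNReal

/-- The spin value of a Boolean: `true ↦ 1`, `false ↦ -1`. -/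
noncomputable def spinVal (b : Bool) : ℝ := if b then 1 else -1

/-- `σ_B = ∏ i ∈ B, σ_i`. -/
noncomputable def sigmaSet {V : Type} (σ : V → Bool) (B : Finset V) : ℝ :=
  ∏ i ∈ B, spinVal (σ i)

/-- The Gibbs (thermal) average `⟨σ_A⟩_J` at inverse temperature `β` for the Hamiltonian
`H(σ) = -∑_{B ∈ ℬ} J_B σ_B`. -/
noncomputable def gibbsAvg {V : Type} [Fintype V] [DecidableEq V] (β : ℝ)
    (ℬ : Finset (Finset V)) (J : ℬ → ℝ) (A : Finset V) : ℝ :=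
  (∑ σ : V → Bool, sigmaSet σ A * Real.exp (β * ∑ B : ℬ, J B * sigmaSet σ (B : Finset V))) /
  (∑ σ : V → Bool, Real.exp (β * ∑ B : ℬ, J B * sigmaSet σ (B : Finset V)))

/-- The product measure of independent Gaussian couplings `J_B ~ N(J_{0,B}, Λ_B²)`. -/
noncomputable def gaussQuenched {V : Type} (ℬ : Finset (Finset V))
    (J0 : Finset V → ℝ) (Λ : Finset V → NNReal) : Measure (ℬ → ℝ) :=
  Measure.pi fun B => gaussianReal (J0 (B : Finset V)) (Λ (B : Finset V) ^ 2)


lemma tanh_sq_eq (x : ℝ) : Real.tanh x ^ 2 = 1 - (Real.cosh x ^ 2)⁻¹ := by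
  rw [Real.tanh_eq_sinh_div_cosh, div_pow, Real.sinh_sq]
  field_simp

lemma tanh_sq_le_one (x : ℝ) : Real.tanh x ^ 2 ≤ 1 := by
  rw [tanh_sq_eq]
  have : 0 ≤ (Real.cosh x ^ 2)⁻¹ := by positivity
  linarith

lemma tanh_sq_mono {x y : ℝ} (h : |x| ≤ |y|) : Real.tanh x ^ 2 ≤ Real.tanh y ^ 2 := by
  rw [tanh_sq_eq, tanh_sq_eq]
  have hx := Real.cosh_pos x
  have hy := Real.cosh_pos y
  have h1 : Real.cosh x ≤ Real.cosh y := Real.cosh_le_cosh.2 h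
  have h2 : Real.cosh x ^ 2 ≤ Real.cosh y ^ 2 := by nlinarith
  have := inv_anti₀ (by positivity) h2
  linarith

lemma continuous_tanh' : Continuous Real.tanh := by
  rw [show Real.tanh = fun x => Real.sinh x / Real.cosh x from funext Real.tanh_eq_sinh_div_cosh]
  exact Real.continuous_sinh.div Real.continuous_cosh fun x => (Real.cosh_pos x).ne'

lemma cosh_log_eq {K : ℝ} (hK : 1 ≤ K) :
    Real.cosh (Real.log (K + Real.sqrt (K ^ 2 - 1))) = K := by
  have hs : 0 ≤ K ^ 2 - 1 := by nlinarith
  have hsq : Real.sqrt (K ^ 2 - 1) ^ 2 = K ^ 2 - 1 := Real.sq_sqrt hs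
  have hpos : 0 < K + Real.sqrt (K ^ 2 - 1) := by positivity
  rw [Real.cosh_eq, Real.exp_log hpos, Real.exp_neg, Real.exp_log hpos]
  have hinv : (K + Real.sqrt (K ^ 2 - 1))⁻¹ = K - Real.sqrt (K ^ 2 - 1) :=
    inv_eq_of_mul_eq_one_right (by nlinarith)
  rw [hinv]; ring

lemma integral_gaussian_density {μ : ℝ} {v : ℝ≥0} (hv : v ≠ 0) (g : ℝ → ℝ) :
    ∫ x, g x ∂(gaussianReal μ v) = ∫ x, gaussianPDFReal μ v x * g x := by
  rw [gaussianReal_of_var_ne_zero _ hv]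
  have hmeas : Measurable fun x => (gaussianPDFReal μ v x).toNNReal :=
    (measurable_gaussianPDFReal μ v).real_toNNReal
  have : (gaussianPDF μ v) = fun x => ((gaussianPDFReal μ v x).toNNReal : ℝ≥0∞) := rfl
  rw [this, integral_withDensity_eq_integral_smul hmeas]
  congr 1
  ext x
  simp [NNReal.smul_def, Real.coe_toNNReal _ (gaussianPDFReal_nonneg μ v x)]

lemma gaussianPDFReal_neg' (d : ℝ) (v : ℝ≥0) (w : ℝ) :
    gaussianPDFReal d v (-w) = gaussianPDFReal (-d) v w := by
  simp only [gaussianPDFReal]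
  ring_nf

lemma integral_comp_neg' (f : ℝ → ℝ) : ∫ x, f (-x) = ∫ x, f x := by
  have A : MeasurableEmbedding fun x : ℝ => -x := (Homeomorph.neg ℝ).measurableEmbedding
  conv_rhs => rw [← Measure.map_neg_eq_self (volume : Measure ℝ)]
  exact (A.integral_map f).symm

/-- Core lemma: shifting the argument of `tanh²` can only increase the centered Gaussian
average. -/
lemma gaussian_shift_tanh_sq {β : ℝ} (hβ : 0 < β) {v : ℝ≥0} (hv : v ≠ 0) (c : ℝ) :
    ∫ x, Real.tanh (β * x) ^ 2 ∂(gaussianReal 0 v)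
      ≤ ∫ x, Real.tanh (β * x + c) ^ 2 ∂(gaussianReal 0 v) := by
  rcases eq_or_ne c 0 with rfl | hc
  · simp
  have hv0 : (0:ℝ) < (v:ℝ) := by positivity
  set G : ℝ → ℝ := fun u => Real.tanh (β * u) ^ 2 with hG
  have hGmeas : Measurable G :=
    ((continuous_tanh'.comp (continuous_const.mul continuous_id)).pow 2).measurable
  have hGnonneg : ∀ u, 0 ≤ G u := fun u => sq_nonneg _
  have hGle : ∀ u, G u ≤ 1 := fun u => tanh_sq_le_one _
  set d : ℝ := c / β with hd
  have hdne : d ≠ 0 := div_ne_zero hc hβ.ne'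
  have hshift : ∀ x, β * x + c = β * (x + d) := by
    intro x; rw [mul_add, hd, mul_div_cancel₀ _ hβ.ne']
  have hR1 : (∫ x, Real.tanh (β * x + c) ^ 2 ∂(gaussianReal 0 v))
      = ∫ u, gaussianPDFReal d v u * G u := by
    rw [integral_gaussian_density hv]
    have he : (fun x => gaussianPDFReal 0 v x * Real.tanh (β * x + c) ^ 2)
        = (fun x => (fun w => gaussianPDFReal d v w * G w) (x + d)) := by
      funext x
      simp only [hG]
      rw [hshift x, gaussianPDFReal_add, sub_self]
    rw [he]
    simpa using integral_add_right_eq_self (fun w => gaussianPDFReal d v w * G w) d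
  have hR2 : (∫ u, gaussianPDFReal d v u * G u) = ∫ u, gaussianPDFReal (-d) v u * G u := by
    rw [← integral_comp_neg' (fun u => gaussianPDFReal (-d) v u * G u)]
    congr 1
    funext u
    simp only [hG]
    rw [gaussianPDFReal_neg', neg_neg, mul_neg, Real.tanh_neg]
    ring
  have hL : (∫ x, Real.tanh (β * x) ^ 2 ∂(gaussianReal 0 v))
      = ∫ u, gaussianPDFReal 0 v u * G u := integral_gaussian_density hv _
  set K : ℝ := Real.exp (d ^ 2 / (2 * v)) with hK
  have hK1 : 1 ≤ K := Real.one_le_exp (by positivity)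
  have hKpos : 0 < K := lt_of_lt_of_le one_pos hK1
  set t₀ : ℝ := Real.log (K + Real.sqrt (K ^ 2 - 1)) with ht₀
  have hcosh_t₀ : Real.cosh t₀ = K := cosh_log_eq hK1
  have ht₀0 : 0 ≤ t₀ := by
    apply Real.log_nonneg
    have : 0 ≤ Real.sqrt (K ^ 2 - 1) := Real.sqrt_nonneg _
    linarith
  have hdabs : 0 < |d| := abs_pos.mpr hdne
  set u₀ : ℝ := t₀ * v / |d| with hu₀
  have hu₀0 : 0 ≤ u₀ := by positivity
  set g0 : ℝ := G u₀ with hg0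
  -- pointwise density identity
  have hPI : ∀ u, (gaussianPDFReal d v u + gaussianPDFReal (-d) v u) / 2 - gaussianPDFReal 0 v u
      = gaussianPDFReal 0 v u * (K⁻¹ * Real.cosh (u * d / v) - 1) := by
    intro u
    simp only [gaussianPDFReal]
    rw [Real.cosh_eq, hK, ← Real.exp_neg]
    have e1 : -(u - d) ^ 2 / (2 * (v:ℝ))
        = -(u - 0) ^ 2 / (2 * v) + (-(d ^ 2 / (2 * v)) + u * d / v) := by
      field_simp; ring
    have e2 : -(u - -d) ^ 2 / (2 * (v:ℝ))
        = -(u - 0) ^ 2 / (2 * v) + (-(d ^ 2 / (2 * v)) + -(u * d / v)) := by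
      field_simp; ring
    rw [e1, e2, Real.exp_add, Real.exp_add, Real.exp_add, Real.exp_add, Real.exp_neg (u * d / v)]
    ring
  -- threshold equivalences
  have habs : ∀ u : ℝ, |u * d / (v:ℝ)| = |u| * |d| / v := by
    intro u; rw [abs_div, abs_mul, abs_of_pos hv0]
  have hvd : u₀ * |d| = t₀ * v := by
    rw [hu₀, div_mul_cancel₀ _ hdabs.ne']
  -- pointwise sign
  have hPS : ∀ u, 0 ≤ (K⁻¹ * Real.cosh (u * d / (v:ℝ)) - 1) * (G u - g0) := by
    intro u
    have hmono : ∀ {a b : ℝ}, |a| ≤ |b| → G a ≤ G b := by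
      intro a b hab
      apply tanh_sq_mono
      rw [abs_mul, abs_mul]
      exact mul_le_mul_of_nonneg_left hab (abs_nonneg β)
    rcases le_total u₀ |u| with h | h
    · have hge : t₀ ≤ |u * d / (v:ℝ)| := by
        rw [habs u, le_div_iff₀ hv0]
        nlinarith [abs_nonneg d]
      have h1 : K ≤ Real.cosh (u * d / v) := by
        rw [← hcosh_t₀]
        exact Real.cosh_le_cosh.2 (by rwa [abs_of_nonneg ht₀0])
      have h2 : g0 ≤ G u := hmono (by rwa [abs_of_nonneg hu₀0])
      have hf1 : 0 ≤ K⁻¹ * Real.cosh (u * d / (v:ℝ)) - 1 := by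
        have h3 : 1 ≤ K⁻¹ * Real.cosh (u * d / (v:ℝ)) := by
          rw [inv_mul_eq_div, le_div_iff₀ hKpos]; linarith
        linarith
      exact mul_nonneg hf1 (by linarith)
    · have hle : |u * d / (v:ℝ)| ≤ t₀ := by
        rw [habs u, div_le_iff₀ hv0]
        nlinarith [abs_nonneg u, abs_nonneg d]
      have h1 : Real.cosh (u * d / v) ≤ K := by
        rw [← hcosh_t₀]
        exact Real.cosh_le_cosh.2 (by rwa [abs_of_nonneg ht₀0])
      have h2 : G u ≤ g0 := hmono (by rwa [abs_of_nonneg hu₀0])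
      have hf1 : K⁻¹ * Real.cosh (u * d / (v:ℝ)) - 1 ≤ 0 := by
        have h3 : K⁻¹ * Real.cosh (u * d / (v:ℝ)) ≤ 1 := by
          rw [inv_mul_eq_div, div_le_one hKpos]; linarith
        linarith
      have := mul_nonneg (neg_nonneg.2 hf1) (neg_nonneg.2 (sub_nonpos.2 h2))
      rwa [neg_mul_neg] at this
  -- integrability facts
  have hb : ∃ C : ℝ, ∀ u, ‖G u - g0‖ ≤ C := by
    refine ⟨2, fun u => ?_⟩
    rw [Real.norm_eq_abs, abs_le]
    have h1 := hGnonneg u; have h2 := hGle u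
    have h3 := hGnonneg u₀; have h4 := hGle u₀
    constructor <;> simp only [hg0] <;> linarith
  have hbG : ∃ C : ℝ, ∀ u, ‖G u‖ ≤ C := by
    refine ⟨1, fun u => ?_⟩
    rw [Real.norm_eq_abs, abs_le]
    exact ⟨by linarith [hGnonneg u], hGle u⟩
  have hint : ∀ μ' : ℝ, Integrable (fun u => gaussianPDFReal μ' v u * (G u - g0)) := by
    intro μ'
    have h2 : Integrable (fun u => (G u - g0) * gaussianPDFReal μ' v u) :=
      (integrable_gaussianPDFReal μ' v).bdd_mul
        ((hGmeas.sub measurable_const).aestronglyMeasurable) (ae_of_all _ hb.choose_spec)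
    exact h2.congr (ae_of_all _ fun u => mul_comm _ _)
  have hintG : ∀ μ' : ℝ, Integrable (fun u => gaussianPDFReal μ' v u * G u) := by
    intro μ'
    have h2 : Integrable (fun u => G u * gaussianPDFReal μ' v u) :=
      (integrable_gaussianPDFReal μ' v).bdd_mul hGmeas.aestronglyMeasurable (ae_of_all _ hbG.choose_spec)
    exact h2.congr (ae_of_all _ fun u => mul_comm _ _)
  -- key nonnegativity
  have hkey : 0 ≤ ∫ u, ((gaussianPDFReal d v u + gaussianPDFReal (-d) v u) / 2
      - gaussianPDFReal 0 v u) * (G u - g0) := by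
    apply integral_nonneg
    intro u
    dsimp only
    rw [hPI u, mul_assoc]
    exact mul_nonneg (gaussianPDFReal_nonneg 0 v u) (hPS u)
  -- expansion
  have hexpand : (∫ u, ((gaussianPDFReal d v u + gaussianPDFReal (-d) v u) / 2
        - gaussianPDFReal 0 v u) * (G u - g0))
      = ((∫ u, gaussianPDFReal d v u * (G u - g0))
          + (∫ u, gaussianPDFReal (-d) v u * (G u - g0))) / 2
        - ∫ u, gaussianPDFReal 0 v u * (G u - g0) := by
    have hfe : (fun u => ((gaussianPDFReal d v u + gaussianPDFReal (-d) v u) / 2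
          - gaussianPDFReal 0 v u) * (G u - g0))
        = fun u => (gaussianPDFReal d v u * (G u - g0)
            + gaussianPDFReal (-d) v u * (G u - g0)) / 2
          - gaussianPDFReal 0 v u * (G u - g0) := funext fun u => by ring
    have hI1 : Integrable (fun u => (gaussianPDFReal d v u * (G u - g0)
        + gaussianPDFReal (-d) v u * (G u - g0)) / 2) volume :=
      ((hint d).add (hint (-d))).div_const 2
    rw [hfe, integral_sub hI1 (hint 0), integral_div, integral_add (hint d) (hint (-d))]
  have hsplit : ∀ μ' : ℝ, (∫ u, gaussianPDFReal μ' v u * (G u - g0))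
      = (∫ u, gaussianPDFReal μ' v u * G u) - g0 := by
    intro μ'
    rw [show (fun u => gaussianPDFReal μ' v u * (G u - g0))
        = fun u => gaussianPDFReal μ' v u * G u - g0 * gaussianPDFReal μ' v u from
        funext fun u => by ring,
      integral_sub (hintG μ') ((integrable_gaussianPDFReal μ' v).const_mul g0),
      integral_const_mul, integral_gaussianPDFReal_eq_one μ' hv, mul_one]
  rw [hL, hR1]
  have e1 := hsplit d
  have e2 := hsplit (-d)
  have e3 := hsplit 0
  rw [hexpand, e1, e2, e3] at hkey
  linarith [hR2]

/-- Mean-shifted version of the core lemma. -/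
lemma gaussian_mean_shift {β : ℝ} (hβ : 0 < β) {v : ℝ≥0} (hv : v ≠ 0) (μ a : ℝ) :
    ∫ x, Real.tanh (β * x) ^ 2 ∂(gaussianReal 0 v)
      ≤ ∫ x, Real.tanh (β * x + a) ^ 2 ∂(gaussianReal μ v) := by
  have hmap : gaussianReal μ v = (gaussianReal 0 v).map (· + μ) := by
    rw [gaussianReal_map_add_const, zero_add]
  have hmeas : AEStronglyMeasurable (fun x => Real.tanh (β * x + a) ^ 2)
      ((gaussianReal 0 v).map (· + μ)) :=
    (((continuous_tanh'.comp ((continuous_const.mul continuous_id).add continuous_const)).pow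
      2)).aestronglyMeasurable
  have hφm : Measurable fun x : ℝ => x + μ := by fun_prop
  rw [hmap, integral_map hφm.aemeasurable hmeas]
  have he : (fun x => Real.tanh (β * (x + μ) + a) ^ 2)
      = fun x => Real.tanh (β * x + (β * μ + a)) ^ 2 := by
    funext x; ring_nf
  calc ∫ x, Real.tanh (β * x) ^ 2 ∂(gaussianReal 0 v)
      ≤ ∫ x, Real.tanh (β * x + (β * μ + a)) ^ 2 ∂(gaussianReal 0 v) :=
        gaussian_shift_tanh_sq hβ hv _
    _ = ∫ x, Real.tanh (β * (x + μ) + a) ^ 2 ∂(gaussianReal 0 v) := by rw [he]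

lemma tanh_sq_integrable {β : ℝ} (ν : Measure ℝ) [IsProbabilityMeasure ν] :
    Integrable (fun x => Real.tanh (β * x) ^ 2) ν := by
  refine Integrable.mono' (integrable_const 1)
    ((continuous_tanh'.comp (continuous_const.mul continuous_id)).pow 2).aestronglyMeasurable
    (ae_of_all _ fun x => ?_)
  rw [Real.norm_eq_abs, abs_of_nonneg (sq_nonneg _)]
  exact tanh_sq_le_one _

/-- The inner one-coupling bound. -/
lemma inner_bound {β : ℝ} (hβ : 0 < β) {v : ℝ≥0} (hv : v ≠ 0) (μ : ℝ) {Z N : ℝ}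
    (hZ : 0 < Z) (hN : |N| ≤ Z) :
    ∫ x, Real.tanh (β * x) ^ 2 ∂(gaussianReal 0 v)
      ≤ ∫ t, ((Real.cosh (β * t) * N + Real.sinh (β * t) * Z)
          / (Real.cosh (β * t) * Z + Real.sinh (β * t) * N)) ^ 2 ∂(gaussianReal μ v) := by
  rcases lt_or_eq_of_le hN with hlt | heq
  · -- |N| < Z
    have hNZ : N ^ 2 < Z ^ 2 := by
      have h1 := le_abs_self N
      have h2 := neg_abs_le N
      nlinarith
    set lam : ℝ := Real.sqrt (Z ^ 2 - N ^ 2) with hlam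
    have hlam2 : lam ^ 2 = Z ^ 2 - N ^ 2 := Real.sq_sqrt (by linarith)
    have hlampos : 0 < lam := Real.sqrt_pos.mpr (by linarith)
    set a : ℝ := Real.arsinh (N / lam) with ha
    have hsinh : Real.sinh a = N / lam := Real.sinh_arsinh _
    have hcosh : Real.cosh a = Z / lam := by
      rw [ha, Real.cosh_arsinh]
      have h1 : 1 + (N / lam) ^ 2 = (Z / lam) ^ 2 := by
        field_simp
        linarith [hlam2]
      rw [h1, Real.sqrt_sq (by positivity)]
    have hpt : ∀ t : ℝ, ((Real.cosh (β * t) * N + Real.sinh (β * t) * Z)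
        / (Real.cosh (β * t) * Z + Real.sinh (β * t) * N)) ^ 2
        = Real.tanh (β * t + a) ^ 2 := by
      intro t
      have hnum : Real.cosh (β * t) * N + Real.sinh (β * t) * Z
          = lam * Real.sinh (β * t + a) := by
        rw [Real.sinh_add, hsinh, hcosh]
        field_simp
        ring
      have hden : Real.cosh (β * t) * Z + Real.sinh (β * t) * N
          = lam * Real.cosh (β * t + a) := by
        rw [Real.cosh_add, hsinh, hcosh]
        field_simp
      rw [hnum, hden, mul_div_mul_left _ _ hlampos.ne', ← Real.tanh_eq_sinh_div_cosh]
    rw [show (fun t : ℝ => ((Real.cosh (β * t) * N + Real.sinh (β * t) * Z)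
        / (Real.cosh (β * t) * Z + Real.sinh (β * t) * N)) ^ 2)
        = fun t => Real.tanh (β * t + a) ^ 2 from funext hpt]
    exact gaussian_mean_shift hβ hv μ a
  · -- |N| = Z
    have hone : ∀ t : ℝ, ((Real.cosh (β * t) * N + Real.sinh (β * t) * Z)
        / (Real.cosh (β * t) * Z + Real.sinh (β * t) * N)) ^ 2 = 1 := by
      intro t
      have he1 : 0 < Real.cosh (β * t) + Real.sinh (β * t) := by
        rw [Real.cosh_add_sinh]; exact Real.exp_pos _
      have he2 : 0 < Real.cosh (β * t) - Real.sinh (β * t) := by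
        rw [Real.cosh_sub_sinh]; exact Real.exp_pos _
      rcases (abs_eq hZ.le).mp heq with hNe | hNe
      · rw [hNe, show Real.cosh (β * t) * Z + Real.sinh (β * t) * Z
            = (Real.cosh (β * t) + Real.sinh (β * t)) * Z from by ring,
          div_self (by positivity), one_pow]
      · rw [hNe, show Real.cosh (β * t) * -Z + Real.sinh (β * t) * Z
            = -((Real.cosh (β * t) - Real.sinh (β * t)) * Z) from by ring,
          show Real.cosh (β * t) * Z + Real.sinh (β * t) * -Z
            = (Real.cosh (β * t) - Real.sinh (β * t)) * Z from by ring,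
          neg_div, div_self (by positivity), neg_one_sq]
    rw [show (fun t : ℝ => ((Real.cosh (β * t) * N + Real.sinh (β * t) * Z)
        / (Real.cosh (β * t) * Z + Real.sinh (β * t) * N)) ^ 2)
        = fun _ : ℝ => (1:ℝ) from funext hone]
    rw [integral_const]
    simp only [measure_univ, ENNReal.toReal_one, probReal_univ, smul_eq_mul, one_mul]
    calc ∫ x, Real.tanh (β * x) ^ 2 ∂(gaussianReal 0 v)
        ≤ ∫ _, (1:ℝ) ∂(gaussianReal 0 v) :=
          integral_mono (tanh_sq_integrable _) (integrable_const 1) fun x => tanh_sq_le_one _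
      _ = 1 := by rw [integral_const]; simp


lemma sigmaSet_pm {V : Type} (σ : V → Bool) (B : Finset V) :
    sigmaSet σ B = 1 ∨ sigmaSet σ B = -1 := by
  classical
  refine Finset.prod_induction _ (fun x => x = 1 ∨ x = -1) ?_ (Or.inl rfl) ?_
  · rintro a b (rfl | rfl) (rfl | rfl) <;> norm_num
  · intro i _
    by_cases h : σ i <;> simp [spinVal, h]

lemma sigmaSet_sq {V : Type} (σ : V → Bool) (B : Finset V) : sigmaSet σ B ^ 2 = 1 := by
  rcases sigmaSet_pm σ B with h | h <;> rw [h] <;> norm_num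

lemma abs_sigmaSet {V : Type} (σ : V → Bool) (B : Finset V) : |sigmaSet σ B| = 1 := by
  rcases sigmaSet_pm σ B with h | h <;> rw [h] <;> norm_num

lemma exp_spin (x R : ℝ) {s : ℝ} (hs : s = 1 ∨ s = -1) :
    Real.exp (x * s + R) = (Real.cosh x + s * Real.sinh x) * Real.exp R := by
  rcases hs with rfl | rfl
  · rw [mul_one, one_mul, Real.exp_add, Real.cosh_add_sinh]
  · rw [mul_neg_one, neg_one_mul, Real.exp_add, ← Real.cosh_sub_sinh, sub_eq_add_neg]

section Gibbs
variable {V : Type} [Fintype V] [DecidableEq V]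

lemma gibbs_update (β : ℝ) (ℬ : Finset (Finset V)) (A : Finset V) (hA : A ∈ ℬ)
    (J : ℬ → ℝ) (t : ℝ) :
    gibbsAvg β ℬ (Function.update J ⟨A, hA⟩ t) A =
      (Real.cosh (β * t) * (∑ σ : V → Bool, sigmaSet σ A *
            Real.exp (β * ∑ B : ℬ, Function.update J ⟨A, hA⟩ 0 B * sigmaSet σ (B : Finset V)))
        + Real.sinh (β * t) * (∑ σ : V → Bool,
            Real.exp (β * ∑ B : ℬ, Function.update J ⟨A, hA⟩ 0 B * sigmaSet σ (B : Finset V))))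
      / (Real.cosh (β * t) * (∑ σ : V → Bool,
            Real.exp (β * ∑ B : ℬ, Function.update J ⟨A, hA⟩ 0 B * sigmaSet σ (B : Finset V)))
        + Real.sinh (β * t) * (∑ σ : V → Bool, sigmaSet σ A *
            Real.exp (β * ∑ B : ℬ, Function.update J ⟨A, hA⟩ 0 B * sigmaSet σ (B : Finset V)))) := by
  classical
  set A' : ℬ := ⟨A, hA⟩ with hA'
  have hsum : ∀ σ : V → Bool, (∑ B : ℬ, Function.update J A' t B * sigmaSet σ (B : Finset V))
      = t * sigmaSet σ A + ∑ B : ℬ, Function.update J A' 0 B * sigmaSet σ (B : Finset V) := by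
    intro σ
    have hterm : ∀ B : ℬ, Function.update J A' t B * sigmaSet σ (B : Finset V)
        = (if B = A' then t * sigmaSet σ A else 0)
          + Function.update J A' 0 B * sigmaSet σ (B : Finset V) := by
      intro B
      rcases eq_or_ne B A' with rfl | h
      · simp [Function.update_self, hA']
      · simp [Function.update_of_ne h, h]
    rw [Finset.sum_congr rfl fun B _ => hterm B, Finset.sum_add_distrib]
    congr 1
    rw [Finset.sum_ite_eq' Finset.univ A' (fun _ => t * sigmaSet σ A)]
    simp
  have hterm2 : ∀ σ : V → Bool,
      Real.exp (β * ∑ B : ℬ, Function.update J A' t B * sigmaSet σ (B : Finset V))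
      = (Real.cosh (β * t) + sigmaSet σ A * Real.sinh (β * t)) *
          Real.exp (β * ∑ B : ℬ, Function.update J A' 0 B * sigmaSet σ (B : Finset V)) := by
    intro σ
    rw [hsum σ, mul_add, show β * (t * sigmaSet σ A) = (β * t) * sigmaSet σ A from by ring]
    exact exp_spin _ _ (sigmaSet_pm σ A)
  unfold gibbsAvg
  congr 1
  · rw [Finset.sum_congr rfl fun σ _ => by rw [hterm2 σ]]
    rw [Finset.mul_sum, Finset.mul_sum, ← Finset.sum_add_distrib]
    refine Finset.sum_congr rfl fun σ _ => ?_
    have h2 := sigmaSet_sq σ A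
    set W := Real.exp (β * ∑ B : ℬ, Function.update J A' 0 B * sigmaSet σ (B : Finset V))
    linear_combination Real.sinh (β * t) * W * h2
  · rw [Finset.sum_congr rfl fun σ _ => by rw [hterm2 σ]]
    rw [Finset.mul_sum, Finset.mul_sum, ← Finset.sum_add_distrib]
    refine Finset.sum_congr rfl fun σ _ => ?_
    ring

lemma gibbs_Z_pos (β : ℝ) (ℬ : Finset (Finset V)) (J : ℬ → ℝ) :
    0 < ∑ σ : V → Bool, Real.exp (β * ∑ B : ℬ, J B * sigmaSet σ (B : Finset V)) :=
  Finset.sum_pos (fun σ _ => Real.exp_pos _) Finset.univ_nonempty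

lemma gibbs_N_le (β : ℝ) (ℬ : Finset (Finset V)) (J : ℬ → ℝ) (A : Finset V) :
    |∑ σ : V → Bool, sigmaSet σ A * Real.exp (β * ∑ B : ℬ, J B * sigmaSet σ (B : Finset V))|
      ≤ ∑ σ : V → Bool, Real.exp (β * ∑ B : ℬ, J B * sigmaSet σ (B : Finset V)) := by
  calc |∑ σ : V → Bool, sigmaSet σ A * Real.exp (β * ∑ B : ℬ, J B * sigmaSet σ (B : Finset V))|
      ≤ ∑ σ : V → Bool, |sigmaSet σ A * Real.exp (β * ∑ B : ℬ, J B * sigmaSet σ (B : Finset V))| :=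
        Finset.abs_sum_le_sum_abs _ _
    _ = ∑ σ : V → Bool, Real.exp (β * ∑ B : ℬ, J B * sigmaSet σ (B : Finset V)) := by
        refine Finset.sum_congr rfl fun σ _ => ?_
        rw [abs_mul, abs_sigmaSet, one_mul, abs_of_pos (Real.exp_pos _)]

lemma gibbsAvg_sq_le_one (β : ℝ) (ℬ : Finset (Finset V)) (J : ℬ → ℝ) (A : Finset V) :
    gibbsAvg β ℬ J A ^ 2 ≤ 1 := by
  have hZ := gibbs_Z_pos β ℬ J
  have hN := gibbs_N_le β ℬ J A
  rw [gibbsAvg, ← sq_abs, abs_div]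
  have h1 : |∑ σ : V → Bool, Real.exp (β * ∑ B : ℬ, J B * sigmaSet σ (B : Finset V))|
      = ∑ σ : V → Bool, Real.exp (β * ∑ B : ℬ, J B * sigmaSet σ (B : Finset V)) :=
    abs_of_pos hZ
  rw [h1]
  have h2 : |∑ σ : V → Bool, sigmaSet σ A *
      Real.exp (β * ∑ B : ℬ, J B * sigmaSet σ (B : Finset V))|
      / (∑ σ : V → Bool, Real.exp (β * ∑ B : ℬ, J B * sigmaSet σ (B : Finset V))) ≤ 1 :=
    (div_le_one hZ).mpr hN
  have h3 : 0 ≤ |∑ σ : V → Bool, sigmaSet σ A *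
      Real.exp (β * ∑ B : ℬ, J B * sigmaSet σ (B : Finset V))|
      / (∑ σ : V → Bool, Real.exp (β * ∑ B : ℬ, J B * sigmaSet σ (B : Finset V))) := by
    positivity
  nlinarith

lemma gibbsAvg_continuous (β : ℝ) (ℬ : Finset (Finset V)) (A : Finset V) :
    Continuous fun J : ℬ → ℝ => gibbsAvg β ℬ J A := by
  unfold gibbsAvg
  apply Continuous.div
  · exact continuous_finset_sum _ fun σ _ => continuous_const.mul
      ((continuous_const.mul (continuous_finset_sum _ fun B _ =>
        (continuous_apply B).mul continuous_const)).rexp)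
  · exact continuous_finset_sum _ fun σ _ =>
      ((continuous_const.mul (continuous_finset_sum _ fun B _ =>
        (continuous_apply B).mul continuous_const)).rexp)
  · intro J
    exact (gibbs_Z_pos β ℬ J).ne'

/-- Inner bound applied to the Gibbs average with updated coupling. -/
lemma key_inner {β : ℝ} (hβ : 0 < β) (ℬ : Finset (Finset V)) {A : Finset V} (hA : A ∈ ℬ)
    {v : ℝ≥0} (hv : v ≠ 0) (μ : ℝ) (J : ℬ → ℝ) :
    ∫ x, Real.tanh (β * x) ^ 2 ∂(gaussianReal 0 v)
      ≤ ∫ t, gibbsAvg β ℬ (Function.update J ⟨A, hA⟩ t) A ^ 2 ∂(gaussianReal μ v) := by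
  have h := gibbs_update β ℬ A hA J
  have hrw : (fun t => gibbsAvg β ℬ (Function.update J ⟨A, hA⟩ t) A ^ 2)
      = fun t => ((Real.cosh (β * t) * (∑ σ : V → Bool, sigmaSet σ A *
            Real.exp (β * ∑ B : ℬ, Function.update J ⟨A, hA⟩ 0 B * sigmaSet σ (B : Finset V)))
        + Real.sinh (β * t) * (∑ σ : V → Bool,
            Real.exp (β * ∑ B : ℬ, Function.update J ⟨A, hA⟩ 0 B * sigmaSet σ (B : Finset V))))
      / (Real.cosh (β * t) * (∑ σ : V → Bool,
            Real.exp (β * ∑ B : ℬ, Function.update J ⟨A, hA⟩ 0 B * sigmaSet σ (B : Finset V)))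
        + Real.sinh (β * t) * (∑ σ : V → Bool, sigmaSet σ A *
            Real.exp (β * ∑ B : ℬ, Function.update J ⟨A, hA⟩ 0 B * sigmaSet σ (B : Finset V))))) ^ 2 :=
    funext fun t => by rw [h t]
  rw [hrw]
  exact inner_bound hβ hv μ (gibbs_Z_pos β ℬ _) (gibbs_N_le β ℬ _ A)

end Gibbs

lemma pi_fintype_congr {ι : Type} {α : ι → Type} [∀ i, MeasurableSpace (α i)]
    (i1 i2 : Fintype ι) (μ : ∀ i, Measure (α i)) :
    @Measure.pi ι α i1 _ μ = @Measure.pi ι α i2 _ μ := by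
  congr 1
  exact Subsingleton.elim _ _



/-- **Correlation inequality for the Gaussian spin glass.** For independent Gaussian couplings
`J_B ~ N(J_{0,B}, Λ_B²)`, the quenched average of the square of the correlation function is
bounded below: `E[tanh²(βJ)]_{N(0, Λ_A²)} ≤ E[⟨σ_A⟩_J²]`. -/
theorem gaussian_correlation_square_lower_bound
    {V : Type} [Fintype V] [DecidableEq V]
    (ℬ : Finset (Finset V)) (hℬ : ∀ B ∈ ℬ, B.Nonempty)
    (β : ℝ) (hβ : 0 < β)
    (J0 : Finset V → ℝ) (Λ : Finset V → NNReal) (hΛ : ∀ B, 0 < Λ B)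
    (A : Finset V) (hA : A ∈ ℬ) :
    ∫ x, Real.tanh (β * x) ^ 2 ∂(gaussianReal 0 (Λ A ^ 2))
      ≤ ∫ J, gibbsAvg β ℬ J A ^ 2 ∂(gaussQuenched ℬ J0 Λ) := by
  classical
  have hv : (Λ A ^ 2 : ℝ≥0) ≠ 0 := pow_ne_zero 2 (hΛ A).ne'
  set A' : ℬ := (⟨A, hA⟩ : ℬ) with hA'
  set μB : ℬ → Measure ℝ :=
    fun B => gaussianReal (J0 (B : Finset V)) (Λ (B : Finset V) ^ 2) with hμB
  haveI hprob : ∀ B : ℬ, IsProbabilityMeasure (μB B) := fun B => by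
    rw [hμB]; infer_instance
  set p : ℬ → Prop := fun B => B = A' with hp
  haveI hU : Unique {B : ℬ // p B} :=
    ⟨⟨⟨A', rfl⟩⟩, fun x => Subtype.ext x.2⟩
  letI instF1 : Fintype {B : ℬ // p B} := inferInstance
  letI instF2 : Fintype {B : ℬ // ¬ p B} := inferInstance
  set F : (ℬ → ℝ) → ℝ := fun J => gibbsAvg β ℬ J A ^ 2 with hF
  have hFcont : Continuous F := (gibbsAvg_continuous β ℬ A).pow 2
  have hFle : ∀ J, F J ≤ 1 := fun J => gibbsAvg_sq_le_one β ℬ J A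
  have hFnonneg : ∀ J, 0 ≤ F J := fun J => sq_nonneg _
  have hmp := measurePreserving_piEquivPiSubtypeProd μB p
  letI instMS1 : ∀ _ : {B : ℬ // p B}, MeasurableSpace ℝ := fun _ => Real.measurableSpace
  rw [pi_fintype_congr (μ := fun i : {B : ℬ // p B} => μB (i : ℬ)) _ instF1,
    pi_fintype_congr (μ := fun i : {B : ℬ // ¬ p B} => μB (i : ℬ)) _ instF2] at hmp
  set e := MeasurableEquiv.piEquivPiSubtypeProd (fun _ : ℬ => ℝ) p with he
  set π₁ : Measure ({B : ℬ // p B} → ℝ) := Measure.pi (fun i : {B : ℬ // p B} => μB i) with hπ₁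
  set π₂ : Measure ({B : ℬ // ¬ p B} → ℝ) :=
    Measure.pi (fun i : {B : ℬ // ¬ p B} => μB i) with hπ₂
  have hq : gaussQuenched ℬ J0 Λ = Measure.pi μB := rfl
  -- step 1: transfer to the product
  have hmeas2 : Measurable (F ∘ e.symm) := hFcont.measurable.comp e.symm.measurable
  have step1 : (∫ J, F J ∂(Measure.pi μB)) = ∫ z, (F ∘ e.symm) z ∂(π₁.prod π₂) := by
    rw [← hmp.map_eq, integral_map e.measurable.aemeasurable hmeas2.aestronglyMeasurable]
    simp only [Function.comp_apply, MeasurableEquiv.symm_apply_apply]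
  -- integrability on the product
  haveI : IsProbabilityMeasure π₁ := by rw [hπ₁]; infer_instance
  haveI : IsProbabilityMeasure π₂ := by rw [hπ₂]; infer_instance
  have hInt : Integrable (F ∘ e.symm) (π₁.prod π₂) := by
    refine Integrable.mono' (integrable_const 1) hmeas2.aestronglyMeasurable
      (ae_of_all _ fun z => ?_)
    simp only [Function.comp_apply]
    rw [Real.norm_eq_abs, abs_of_nonneg (hFnonneg _)]
    exact hFle _
  -- step 2: Fubini
  have step2 : (∫ z, (F ∘ e.symm) z ∂(π₁.prod π₂))
      = ∫ y, (∫ x, (F ∘ e.symm) (x, y) ∂π₁) ∂π₂ := integral_prod_symm _ hInt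
  -- step 3: inner integral bound
  have hpil : (fun i : {B : ℬ // p B} => μB (i : ℬ)) = fun _ : {B : ℬ // p B} => μB A' := by
    funext i
    rw [show (i : ℬ) = A' from i.2]
  set fu := MeasurableEquiv.funUnique {B : ℬ // p B} ℝ with hfu
  have hmp2 : MeasurePreserving fu π₁ (μB A') := by
    have h0 := measurePreserving_funUnique (μB A') {B : ℬ // p B}
    rw [pi_fintype_congr (μ := fun _ : {B : ℬ // p B} => μB A') _ instF1] at h0
    rw [hπ₁, hpil]
    exact h0
  have step3 : ∀ y : {B : ℬ // ¬ p B} → ℝ,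
      (∫ x, Real.tanh (β * x) ^ 2 ∂(gaussianReal 0 (Λ A ^ 2)))
        ≤ ∫ x, (F ∘ e.symm) (x, y) ∂π₁ := by
    intro y
    set Jb : ℬ → ℝ := fun B => if h : p B then 0 else y ⟨B, h⟩ with hJb
    have hid : ∀ t : ℝ, e.symm (fu.symm t, y) = Function.update Jb A' t := by
      intro t
      funext B
      rcases eq_or_ne B A' with rfl | h
      · simp [he, hfu, MeasurableEquiv.piEquivPiSubtypeProd, MeasurableEquiv.funUnique,
          Equiv.piEquivPiSubtypeProd, Equiv.funUnique, Function.update_self, hp]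
      · simp [he, hfu, MeasurableEquiv.piEquivPiSubtypeProd, MeasurableEquiv.funUnique,
          Equiv.piEquivPiSubtypeProd, Equiv.funUnique, Function.update_of_ne h, hJb, hp, h]
    have hinner : (∫ x, (F ∘ e.symm) (x, y) ∂π₁)
        = ∫ t, F (e.symm (fu.symm t, y)) ∂(μB A') := by
      rw [← hmp2.map_eq, integral_map fu.measurable.aemeasurable]
      · simp only [Function.comp_apply, MeasurableEquiv.symm_apply_apply]
      · exact (hFcont.measurable.comp
          ((e.symm.measurable.comp (measurable_prodMk_right.comp
            fu.symm.measurable)))).aestronglyMeasurable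
    rw [hinner]
    have hintegrand : (fun t => F (e.symm (fu.symm t, y)))
        = fun t => gibbsAvg β ℬ (Function.update Jb A' t) A ^ 2 := by
      funext t
      rw [hid t]
    rw [hintegrand]
    have hμBA : μB A' = gaussianReal (J0 A) (Λ A ^ 2) := rfl
    rw [hμBA]
    exact key_inner hβ ℬ hA hv (J0 A) Jb
  -- step 4: conclude
  rw [hq, step1, step2]
  have hInt2 : Integrable (fun y => ∫ x, (F ∘ e.symm) (x, y) ∂π₁) π₂ :=
    hInt.integral_prod_right
  calc (∫ x, Real.tanh (β * x) ^ 2 ∂(gaussianReal 0 (Λ A ^ 2)))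
      = ∫ _, (∫ x, Real.tanh (β * x) ^ 2 ∂(gaussianReal 0 (Λ A ^ 2))) ∂π₂ := by
        rw [integral_const]; simp
    _ ≤ ∫ y, (∫ x, (F ∘ e.symm) (x, y) ∂π₁) ∂π₂ :=
        integral_mono (integrable_const _) hInt2 step3
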